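/- Let {f_n} be a higher {g_n,h_n}-derivation on an algebra A over a field of characteristic zero with f_0 = g_0 = h_0 = I. Then there exists a sequence {F_n} of linear maps, where each F_n is a {G_n,H_n}-derivation for suitable linear maps G_n, H_n, such that for every non-negative integer n: (n+1) f_{n+1} = \sum_{k=0}^{n} F_{k+1} \circ f_{n-k}, (n+1) g_{n+1} = \sum_{k=0}^{n} G_{k+1} \circ g_{n-k}, and (n+1) h_{n+1} = \sum_{k=0}^{n} H_{k+1} \circ h_{n-k}. -/

import Mathlib

open Finset

section
variable {K A : Type*} [Field K] [CharZero K] [Ring A] [Algebra K A]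

/-- Auxiliary recursive definition of the sequence of derivations. -/
noncomputable def mkDeriv (f : ℕ → Module.End K A) : ℕ → Module.End K A
  | 0 => 0
  | n + 1 => ((n : K) + 1) • f (n + 1)
      - ∑ k ∈ (Finset.range n).attach, mkDeriv f (k.1 + 1) * f (n - k.1)
termination_by n => n
decreasing_by
  have := k.2
  simp only [Finset.mem_range] at this
  omega

lemma mkDeriv_succ (f : ℕ → Module.End K A) (n : ℕ) :
    mkDeriv f (n + 1) = ((n : K) + 1) • f (n + 1)
      - ∑ k ∈ Finset.range n, mkDeriv f (k + 1) * f (n - k) := by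
  rw [mkDeriv]
  congr 1
  exact Finset.sum_attach (Finset.range n) (fun k => mkDeriv f (k + 1) * f (n - k))

lemma mkDeriv_rec (f : ℕ → Module.End K A) (hf0 : f 0 = 1) (n : ℕ) :
    ((n : K) + 1) • f (n + 1) = ∑ k ∈ Finset.range (n + 1), mkDeriv f (k + 1) * f (n - k) := by
  rw [Finset.sum_range_succ, Nat.sub_self, hf0, mul_one, mkDeriv_succ]
  abel

end

lemma tri_comm {M : Type*} [AddCommMonoid M] (n : ℕ) (f : ℕ → ℕ → M) :
    ∑ j ∈ range (n + 1), ∑ k ∈ range (n - j + 1), f j k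
      = ∑ k ∈ range (n + 1), ∑ j ∈ range (n - k + 1), f j k :=
  Finset.sum_comm' (by intro x y; simp only [Finset.mem_range]; omega)

lemma tri_reindex {M : Type*} [AddCommMonoid M] (n : ℕ) (f : ℕ → ℕ → M) :
    ∑ m ∈ range (n + 1), ∑ k ∈ range (m + 1), f k (m - k)
      = ∑ k ∈ range (n + 1), ∑ j ∈ range (n - k + 1), f k j := by
  rw [Finset.sum_sigma', Finset.sum_sigma']
  refine Finset.sum_nbij' (i := fun p => ⟨p.2, p.1 - p.2⟩) (j := fun p => ⟨p.1 + p.2, p.1⟩)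
    ?_ ?_ ?_ ?_ ?_
  · intro p hp; simp only [Finset.mem_sigma, Finset.mem_range] at *; omega
  · intro p hp; simp only [Finset.mem_sigma, Finset.mem_range] at *; omega
  · intro p hp; simp only [Finset.mem_sigma, Finset.mem_range] at hp
    ext <;> simp <;> omega
  · intro p hp; simp only [Finset.mem_sigma, Finset.mem_range] at hp
    ext <;> simp <;> omega
  · intro p hp; rfl

lemma keyDeriv {K A : Type*} [Field K] [CharZero K] [Ring A] [Algebra K A]
    (f g h : ℕ → Module.End K A) (hg0 : g 0 = 1) (hh0 : h 0 = 1)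
    (hd : ∀ (n : ℕ) (a b : A), f n (a * b) = ∑ k ∈ range (n + 1), g (n - k) a * h k b) :
    ∀ (n : ℕ) (a b : A),
      mkDeriv f (n + 1) (a * b) = mkDeriv g (n + 1) a * b + a * mkDeriv h (n + 1) b := by
  intro n
  induction n using Nat.strong_induction_on with
  | _ n ih =>
  intro a b
  have hF : mkDeriv f (n + 1) (a * b)
      = ((n : K) + 1) • f (n + 1) (a * b)
        - ∑ k ∈ range n, mkDeriv f (k + 1) (f (n - k) (a * b)) := by
    rw [mkDeriv_succ]
    simp [LinearMap.sub_apply, LinearMap.smul_apply, Finset.sum_apply, Module.End.mul_apply]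
  have hsub : ∀ k ∈ range n,
      mkDeriv f (k + 1) (f (n - k) (a * b))
        = ∑ j ∈ range (n - k + 1),
            (mkDeriv g (k + 1) (g (n - k - j) a) * h j b
              + g (n - k - j) a * mkDeriv h (k + 1) (h j b)) := by
    intro k hk
    rw [hd (n - k), map_sum]
    exact Finset.sum_congr rfl fun j _ => ih k (Finset.mem_range.mp hk) _ _
  have hT1 : ∑ j ∈ range (n + 2), ((n + 1 - j : ℕ) : K) • (g (n + 1 - j) a * h j b)
      = ∑ k ∈ range n, ∑ j ∈ range (n - k + 1),
          mkDeriv g (k + 1) (g (n - k - j) a) * h j b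
        + mkDeriv g (n + 1) a * b := by
    calc ∑ j ∈ range (n + 2), ((n + 1 - j : ℕ) : K) • (g (n + 1 - j) a * h j b)
        = ∑ j ∈ range (n + 1), ∑ k ∈ range (n - j + 1),
            mkDeriv g (k + 1) (g (n - j - k) a) * h j b := by
          rw [Finset.sum_range_succ, Nat.sub_self]
          simp only [Nat.cast_zero, zero_smul, add_zero]
          refine Finset.sum_congr rfl fun j hj => ?_
          have hj' : j ≤ n := by have := Finset.mem_range.mp hj; omega
          have h1 : n + 1 - j = (n - j) + 1 := by omega
          have h2 : ((((n - j) : ℕ) : K) + 1) • g ((n - j) + 1) a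
              = ∑ k ∈ range (n - j + 1), mkDeriv g (k + 1) (g (n - j - k) a) := by
            have := congrArg (fun (φ : Module.End K A) => φ a) (mkDeriv_rec g hg0 (n - j))
            simpa [Finset.sum_apply, Module.End.mul_apply] using this
          rw [h1, ← smul_mul_assoc]
          push_cast
          rw [h2, Finset.sum_mul]
      _ = ∑ k ∈ range (n + 1), ∑ j ∈ range (n - k + 1),
            mkDeriv g (k + 1) (g (n - j - k) a) * h j b :=
          tri_comm n (fun j k => mkDeriv g (k + 1) (g (n - j - k) a) * h j b)
      _ = _ := by
          rw [Finset.sum_range_succ]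
          congr 1
          · refine Finset.sum_congr rfl fun k hk => Finset.sum_congr rfl fun j hj => ?_
            rw [show n - j - k = n - k - j from by omega]
          · rw [Nat.sub_self]
            simp [hg0, hh0]
  have hT2 : ∑ j ∈ range (n + 2), ((j : ℕ) : K) • (g (n + 1 - j) a * h j b)
      = ∑ k ∈ range n, ∑ j ∈ range (n - k + 1),
          g (n - k - j) a * mkDeriv h (k + 1) (h j b)
        + a * mkDeriv h (n + 1) b := by
    calc ∑ j ∈ range (n + 2), ((j : ℕ) : K) • (g (n + 1 - j) a * h j b)
        = ∑ i ∈ range (n + 1), ∑ k ∈ range (i + 1),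
            (fun k j => g (n - k - j) a * mkDeriv h (k + 1) (h j b)) k (i - k) := by
          rw [Finset.sum_range_succ']
          simp only [Nat.cast_zero, zero_smul, add_zero]
          refine Finset.sum_congr rfl fun i hi => ?_
          have hi' : i ≤ n := by have := Finset.mem_range.mp hi; omega
          have h1 : n + 1 - (i + 1) = n - i := by omega
          have h2 : (((i : ℕ) : K) + 1) • h (i + 1) b
              = ∑ k ∈ range (i + 1), mkDeriv h (k + 1) (h (i - k) b) := by
            have := congrArg (fun (φ : Module.End K A) => φ b) (mkDeriv_rec h hh0 i)
            simpa [Finset.sum_apply, Module.End.mul_apply] using this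
          rw [h1, ← mul_smul_comm]
          push_cast
          rw [h2, Finset.mul_sum]
          refine Finset.sum_congr rfl fun k hk => ?_
          have hk' : k ≤ i := by have := Finset.mem_range.mp hk; omega
          rw [show n - k - (i - k) = n - i from by omega]
      _ = ∑ k ∈ range (n + 1), ∑ j ∈ range (n - k + 1),
            g (n - k - j) a * mkDeriv h (k + 1) (h j b) :=
          tri_reindex n (fun k j => g (n - k - j) a * mkDeriv h (k + 1) (h j b))
      _ = _ := by
          rw [Finset.sum_range_succ, Nat.sub_self]
          simp [hg0, hh0]
  have hmain : ((n : K) + 1) • f (n + 1) (a * b)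
      = ∑ j ∈ range (n + 2), ((n + 1 - j : ℕ) : K) • (g (n + 1 - j) a * h j b)
        + ∑ j ∈ range (n + 2), ((j : ℕ) : K) • (g (n + 1 - j) a * h j b) := by
    rw [hd (n + 1), Finset.smul_sum, ← Finset.sum_add_distrib]
    refine Finset.sum_congr rfl fun j hj => ?_
    have hj' : j ≤ n + 1 := by have := Finset.mem_range.mp hj; omega
    rw [← add_smul]
    congr 1
    rw [Nat.cast_sub hj']
    push_cast
    ring
  rw [hF, Finset.sum_congr rfl hsub, hmain, hT1, hT2]
  simp only [Finset.sum_add_distrib]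
  abel

/-- Lemma 2.2: every higher `{gₙ,hₙ}`-derivation with `f₀ = g₀ = h₀ = I` arises from a
sequence of `{Gₙ,Hₙ}`-derivations via the recursion `(n+1) fₙ₊₁ = ∑ₖ Fₖ₊₁ ∘ fₙ₋ₖ`. -/
theorem higher_gh_derivation_recursion
    {K A : Type*} [Field K] [CharZero K] [Ring A] [Algebra K A]
    (f g h : ℕ → Module.End K A)
    (hf0 : f 0 = 1) (hg0 : g 0 = 1) (hh0 : h 0 = 1)
    (hhd : ∀ (n : ℕ) (a b : A),
      f n (a * b) = ∑ k ∈ Finset.range (n + 1), g (n - k) a * h k b ∧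
      f n (a * b) = ∑ k ∈ Finset.range (n + 1), h (n - k) a * g k b) :
    ∃ F G H : ℕ → Module.End K A,
      (∀ n, 1 ≤ n → ∀ a b : A,
        F n (a * b) = G n a * b + a * H n b ∧ F n (a * b) = H n a * b + a * G n b) ∧
      (∀ n : ℕ,
        ((n : K) + 1) • f (n + 1) = ∑ k ∈ Finset.range (n + 1), F (k + 1) * f (n - k) ∧
        ((n : K) + 1) • g (n + 1) = ∑ k ∈ Finset.range (n + 1), G (k + 1) * g (n - k) ∧
        ((n : K) + 1) • h (n + 1) = ∑ k ∈ Finset.range (n + 1), H (k + 1) * h (n - k)) := by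
  refine ⟨mkDeriv f, mkDeriv g, mkDeriv h, ?_, ?_⟩
  · rintro (_ | n) hn a b
    · omega
    · exact ⟨keyDeriv f g h hg0 hh0 (fun m a b => (hhd m a b).1) n a b,
        keyDeriv f h g hh0 hg0 (fun m a b => (hhd m a b).2) n a b⟩
  · intro n
    exact ⟨mkDeriv_rec f hf0 n, mkDeriv_rec g hg0 n, mkDeriv_rec h hh0 n⟩
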